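/- Suppose a countable-state MDP with stochastic transition probabilities q, bounded costs, and compact action sets satisfying the Compactness Conditions also satisfies Assumption HT with state ℓ and constant K*. Let v̄ be the optimal β̄-discounted value of the HV-AG-transformed MDP. Then the constant w := v̄(ℓ) and the bounded function h(x) := μ(x)(v̄(x) − v̄(ℓ)) satisfy the average-cost optimality equation w + h(x) = min_{a∈A(x)} [c(x,a) + Σ_{y∈X} q(y|x,a) h(y)] for all x ∈ X. -/

import Mathlib

/-- Iterated application of a real matrix to a function: `iterR P f n = Pⁿ f`. -/
noncomputable def iterR {X : Type*} (P : X → X → ℝ) (f : X → ℝ) : ℕ → X → ℝ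
  | 0 => f
  | n + 1 => fun x => ∑' y, P x y * iterR P f n y

set_option maxHeartbeats 1000000 in
/-- Theorem 2(i): for a countable-state MDP with stochastic transition
probabilities, bounded costs, and compact action sets satisfying the Compactness
Conditions and Assumption HT, if `v̄` is the optimal `β̄`-discounted value of the
HV-AG-transformed MDP (the unique bounded solution of its optimality equation, with
`v̄(x̄) = 0`), then `w = v̄(ℓ)` and `h(x) = μ(x)(v̄(x) − v̄(ℓ))` satisfy the
average-cost optimality equation. -/
theorem stmt14 {X A : Type*} [Countable X] [DecidableEq X] [TopologicalSpace A] (ℓ : X)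
    (Act : X → Set A) (hAct : ∀ x, (Act x).Nonempty) (hActc : ∀ x, IsCompact (Act x))
    (q : X → A → X → ℝ) (hq0 : ∀ x a y, 0 ≤ q x a y)
    (hqsto : ∀ x a, HasSum (q x a) 1)
    (hqcont : ∀ x y, ContinuousOn (fun a => q x a y) (Act x))
    (c : X → A → ℝ) (Cc : ℝ) (hc : ∀ x a, |c x a| ≤ Cc)
    (hclsc : ∀ x, LowerSemicontinuousOn (fun a => c x a) (Act x))
    (K : ℝ) (hK : 1 ≤ K)
    (hHT : ∀ φ : X → A, (∀ x, φ x ∈ Act x) → ∀ x,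
      (Summable fun n =>
        iterR (fun x y => if y = ℓ then 0 else q x (φ x) y) (fun _ => (1 : ℝ)) n x) ∧
      (∑' n : ℕ,
        iterR (fun x y => if y = ℓ then 0 else q x (φ x) y) (fun _ => (1 : ℝ)) n x) ≤ K)
    (μ : X → ℝ) (hμ1 : ∀ x, 1 ≤ μ x) (hμK : ∀ x, μ x ≤ K)
    (hμ : ∀ x, ∀ a ∈ Act x, 1 + ∑' y, (if y = ℓ then 0 else q x a y * μ y) ≤ μ x)
    (β : ℝ) (hβl : (K - 1) / K ≤ β) (hβu : β < 1)
    (vbar : Option X → ℝ) (Cv : ℝ) (hvb : ∀ z, |vbar z| ≤ Cv) (hv0 : vbar none = 0)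
    (hveq : ∀ x : X, vbar (some x)
      = ⨅ a : Act x, (c x a / μ x + β * ∑' z : Option X,
          (match z with
            | some y =>
                if y = ℓ then
                  (μ x - 1 - ∑' w, (if w = ℓ then 0 else q x (a : A) w * μ w)) / (β * μ x)
                else q x (a : A) y * μ y / (β * μ x)
            | none => 1 - (μ x - 1) / (β * μ x)) * vbar z)) :
    ∀ x : X, vbar (some ℓ) + μ x * (vbar (some x) - vbar (some ℓ))
      = ⨅ a : Act x, (c x a
          + ∑' y : X, q x a y * (μ y * (vbar (some y) - vbar (some ℓ)))) := by
  intro x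
  have hμx1 : (1 : ℝ) ≤ μ x := hμ1 x
  have hμx0 : (0 : ℝ) < μ x := lt_of_lt_of_le one_pos hμx1
  haveI : Nonempty (Act x) := (hAct x).to_subtype
  set L : ℝ := vbar (some ℓ) with hLdef
  have hCv : (0 : ℝ) ≤ Cv := (abs_nonneg _).trans (hvb none)
  have hLb : |L| ≤ Cv := hvb (some ℓ)
  have hβnn : (0 : ℝ) ≤ β := le_trans (div_nonneg (by linarith) (by linarith)) hβl
  -- the function inside the discounted optimality equation
  set F : Act x → ℝ := fun a => (c x a / μ x + β * ∑' z : Option X,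
          (match z with
            | some y =>
                if y = ℓ then
                  (μ x - 1 - ∑' w, (if w = ℓ then 0 else q x (a : A) w * μ w)) / (β * μ x)
                else q x (a : A) y * μ y / (β * μ x)
            | none => 1 - (μ x - 1) / (β * μ x)) * vbar z) with hFdef
  set G : Act x → ℝ := fun a => (c x a
          + ∑' y : X, q x (a : A) y * (μ y * (vbar (some y) - L))) with hGdef
  have hvF : vbar (some x) = ⨅ a : Act x, F a := hveq x
  -- summability facts for a fixed action
  have hμnn : ∀ y, (0 : ℝ) ≤ μ y := fun y => le_trans zero_le_one (hμ1 y)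
  have Ssetup : ∀ a : Act x,
      Summable (q x (a : A)) ∧
      Summable (fun y => q x (a : A) y * μ y) ∧
      Summable (fun y => q x (a : A) y * μ y * vbar (some y)) ∧
      Summable (fun y => if y = ℓ then 0 else q x (a : A) y * μ y * vbar (some y)) ∧
      Summable (fun y => q x (a : A) y * (μ y * (vbar (some y) - L))) := by
    intro a
    have Sq : Summable (q x (a : A)) := (hqsto x a).summable
    have Sμ : Summable (fun y => q x (a : A) y * μ y) := by
      refine Summable.of_nonneg_of_le (fun y => mul_nonneg (hq0 x a y) (hμnn y))
        (fun y => ?_) (Sq.mul_right K)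
      exact mul_le_mul_of_nonneg_left (hμK y) (hq0 x a y)
    have Sμnn : ∀ y, (0 : ℝ) ≤ q x (a : A) y * μ y :=
      fun y => mul_nonneg (hq0 x a y) (hμnn y)
    have Sv : Summable (fun y => q x (a : A) y * μ y * vbar (some y)) := by
      refine Summable.of_norm_bounded (Sμ.mul_right Cv) (fun y => ?_)
      rw [norm_mul, Real.norm_of_nonneg (Sμnn y)]
      exact mul_le_mul_of_nonneg_left ((Real.norm_eq_abs _) ▸ hvb (some y)) (Sμnn y)
    have SU : Summable (fun y => if y = ℓ then 0 else q x (a : A) y * μ y * vbar (some y)) := by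
      refine Summable.of_norm_bounded (Sμ.mul_right Cv) (fun y => ?_)
      by_cases hy : y = ℓ
      · simp [hy]
        exact mul_nonneg (Sμnn ℓ) hCv
      · simp only [hy, if_false]
        rw [norm_mul, Real.norm_of_nonneg (Sμnn y)]
        exact mul_le_mul_of_nonneg_left ((Real.norm_eq_abs _) ▸ hvb (some y)) (Sμnn y)
    have Svl : Summable (fun y => q x (a : A) y * (μ y * (vbar (some y) - L))) := by
      refine ((Sv.sub (Sμ.mul_right L)).congr (fun y => ?_))
      ring
    exact ⟨Sq, Sμ, Sv, SU, Svl⟩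
  -- the key pointwise identity
  have key : ∀ a : Act x, μ x * F a - (μ x - 1) * L = G a := by
    intro a
    obtain ⟨Sq, Sμ, Sv, SU, Svl⟩ := Ssetup a
    have ST : Summable (fun w => if w = ℓ then 0 else q x (a : A) w * μ w) := by
      refine Summable.of_nonneg_of_le (fun w => ?_) (fun w => ?_) Sμ
      · by_cases hw : w = ℓ <;> simp [hw]
        exact mul_nonneg (hq0 x a w) (hμnn w)
      · by_cases hw : w = ℓ <;> simp [hw]
        exact mul_nonneg (hq0 x a ℓ) (hμnn ℓ)
    set T : ℝ := ∑' w, (if w = ℓ then 0 else q x (a : A) w * μ w) with hTdef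
    set U : ℝ := ∑' y, (if y = ℓ then 0 else q x (a : A) y * μ y * vbar (some y)) with hUdef
    -- compute G a
    have hG : G a = c x a + (q x (a : A) ℓ * μ ℓ * L + U) - L * (q x (a : A) ℓ * μ ℓ + T) := by
      have h1 : (∑' y : X, q x (a : A) y * (μ y * (vbar (some y) - L)))
          = (∑' y : X, q x (a : A) y * μ y * vbar (some y))
            - (∑' y : X, q x (a : A) y * μ y * L) := by
        rw [← Summable.tsum_sub Sv (Sμ.mul_right L)]
        exact tsum_congr fun y => by ring
      have h2 : (∑' y : X, q x (a : A) y * μ y * vbar (some y))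
          = q x (a : A) ℓ * μ ℓ * vbar (some ℓ) + U := Summable.tsum_eq_add_tsum_ite Sv ℓ
      have h3 : (∑' y : X, q x (a : A) y * μ y * L)
          = (∑' y : X, q x (a : A) y * μ y) * L := tsum_mul_right
      have h4 : (∑' y : X, q x (a : A) y * μ y) = q x (a : A) ℓ * μ ℓ + T :=
        Summable.tsum_eq_add_tsum_ite Sμ ℓ
      rw [hGdef]
      simp only []
      rw [h1, h2, h3, h4, ← hLdef]
      ring
    rcases eq_or_lt_of_le hβnn with hβ0 | hβpos
    · -- degenerate case β = 0 : then K = 1, μ ≡ 1, and q x a y = 0 for y ≠ ℓ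
      have hβ : β = 0 := hβ0.symm
      have hKpos : (0 : ℝ) < K := by linarith
      have hK1 : K = 1 := by
        have h1 : (K - 1) / K ≤ 0 := hβ ▸ hβl
        rcases div_nonpos_iff.mp h1 with ⟨h2, h3⟩ | ⟨h2, h3⟩
        · linarith
        · linarith
      have hμall : ∀ y, μ y = 1 := fun y => le_antisymm (hK1 ▸ hμK y) (hμ1 y)
      have hT0 : T = 0 := by
        have h1 := hμ x a a.2
        rw [← hTdef] at h1
        have h2 : (0 : ℝ) ≤ T := by
          rw [hTdef]
          refine tsum_nonneg fun w => ?_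
          by_cases hw : w = ℓ <;> simp [hw]
          exact mul_nonneg (hq0 x a w) (hμnn w)
        have h3 : μ x = 1 := hμall x
        linarith
      have hq00 : ∀ y, y ≠ ℓ → q x (a : A) y = 0 := by
        intro y hy
        have hle : (if y = ℓ then (0:ℝ) else q x (a : A) y * μ y)
            ≤ ∑' w, (if w = ℓ then (0:ℝ) else q x (a : A) w * μ w) := by
          refine Summable.le_tsum ST y fun j _ => ?_
          by_cases hj : j = ℓ <;> simp [hj]
          exact mul_nonneg (hq0 x a j) (hμnn j)
        rw [← hTdef, hT0, if_neg hy] at hle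
        have h2 := hμall y
        nlinarith [hq0 x a y]
      have hGz : G a = c x a := by
        rw [hGdef]
        simp only []
        have : (fun y => q x (a : A) y * (μ y * (vbar (some y) - L))) = fun _ => (0 : ℝ) := by
          funext y
          by_cases hy : y = ℓ
          · rw [hy, ← hLdef]; ring
          · rw [hq00 y hy]; ring
        rw [this, tsum_zero]; ring
      have hFz : F a = c x a := by
        rw [hFdef]
        simp only [hβ, zero_mul, add_zero]
        rw [hμall x, div_one]
      rw [hGz, hFz, hμall x]
      ring
    · -- main case β > 0
      have hbμ : (0 : ℝ) < β * μ x := mul_pos hβpos hμx0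
      have hbμne : β * μ x ≠ 0 := ne_of_gt hbμ
      -- compute the tsum over Option X
      set f : Option X → ℝ := fun z =>
          (match z with
            | some y =>
                if y = ℓ then (μ x - 1 - T) / (β * μ x)
                else q x (a : A) y * μ y / (β * μ x)
            | none => 1 - (μ x - 1) / (β * μ x)) * vbar z with hfdef
      have hsupp : Function.support f ⊆ Set.range some := by
        intro z hz
        rcases z with _ | y
        · exfalso; apply hz; rw [hfdef]; simp [hv0]
        · exact ⟨y, rfl⟩
      have hsome : (fun y : X => f (some y))
          = fun y => (if y = ℓ then (μ x - 1 - T) / (β * μ x) * L else 0)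
              + (β * μ x)⁻¹ * (if y = ℓ then 0 else q x (a : A) y * μ y * vbar (some y)) := by
        funext y
        rw [hfdef]
        by_cases hy : y = ℓ
        · simp only [hy, if_true, ← hLdef]; ring
        · simp only [hy, if_false]
          ring
      have Sg : Summable (fun y => (β * μ x)⁻¹
          * (if y = ℓ then 0 else q x (a : A) y * μ y * vbar (some y))) := SU.mul_left _
      have Sh : Summable (fun y : X => if y = ℓ then (μ x - 1 - T) / (β * μ x) * L else 0) :=
        (hasSum_ite_eq ℓ _).summable
      have hsum : (∑' z : Option X, f z)
          = (μ x - 1 - T) / (β * μ x) * L + (β * μ x)⁻¹ * U := by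
        rw [← (Option.some_injective X).tsum_eq hsupp, hsome,
          Summable.tsum_add Sh Sg, (hasSum_ite_eq ℓ _).tsum_eq, tsum_mul_left, ← hUdef]
      have hFa : F a = c x a / μ x
          + β * ((μ x - 1 - T) / (β * μ x) * L + (β * μ x)⁻¹ * U) := by
        rw [hFdef]
        simp only []
        rw [← hsum, hfdef]
      rw [hFa, hG]
      have hβne : β ≠ 0 := ne_of_gt hβpos
      have hμne : μ x ≠ 0 := ne_of_gt hμx0
      field_simp
      ring
  -- lower bound for G, hence for F
  have hGlb : ∀ a : Act x, -Cc - K * (2 * Cv) ≤ G a := by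
    intro a
    obtain ⟨Sq, Sμ, Sv, SU, Svl⟩ := Ssetup a
    have hca : -Cc ≤ c x a := neg_le_of_abs_le (hc x a)
    have hterm : ∀ y, -(q x (a : A) y * (K * (2 * Cv)))
        ≤ q x (a : A) y * (μ y * (vbar (some y) - L)) := by
      intro y
      have h1 : |μ y * (vbar (some y) - L)| ≤ K * (2 * Cv) := by
        rw [abs_mul, abs_of_nonneg (hμnn y)]
        have h2 : |vbar (some y) - L| ≤ 2 * Cv := by
          have := hvb (some y)
          have := hLb
          calc |vbar (some y) - L| ≤ |vbar (some y)| + |L| := abs_sub _ _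
            _ ≤ 2 * Cv := by linarith
        have h3 : μ y ≤ K := hμK y
        have h4 : 0 ≤ |vbar (some y) - L| := abs_nonneg _
        nlinarith [hμnn y]
      have h2 : -(K * (2 * Cv)) ≤ μ y * (vbar (some y) - L) := neg_le_of_abs_le h1
      calc -(q x (a : A) y * (K * (2 * Cv))) = q x (a : A) y * -(K * (2 * Cv)) := by ring
        _ ≤ q x (a : A) y * (μ y * (vbar (some y) - L)) :=
            mul_le_mul_of_nonneg_left h2 (hq0 x a y)
    have hts : -(K * (2 * Cv)) ≤ ∑' y, q x (a : A) y * (μ y * (vbar (some y) - L)) := by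
      have h1 : (∑' y, -(q x (a : A) y * (K * (2 * Cv))))
          ≤ ∑' y, q x (a : A) y * (μ y * (vbar (some y) - L)) :=
        Summable.tsum_le_tsum hterm ((Sq.mul_right _).neg) Svl
      have h2 : (∑' y, -(q x (a : A) y * (K * (2 * Cv)))) = -(K * (2 * Cv)) := by
        rw [tsum_neg, tsum_mul_right, (hqsto x a).tsum_eq]
        ring
      linarith
    have : G a = c x a + ∑' y, q x (a : A) y * (μ y * (vbar (some y) - L)) := rfl
    rw [this]
    linarith
  have hbdd : BddBelow (Set.range F) := by
    refine ⟨(-Cc - K * (2 * Cv) + (μ x - 1) * L) / μ x, ?_⟩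
    rintro _ ⟨a, rfl⟩
    rw [div_le_iff₀ hμx0]
    have h1 := key a
    have h2 := hGlb a
    nlinarith
  -- conclude via the monotone affine map t ↦ μ x * t - (μ x - 1) * L
  have hmono : Monotone (fun t : ℝ => μ x * t - (μ x - 1) * L) := by
    intro s t h
    have := mul_le_mul_of_nonneg_left h (le_of_lt hμx0)
    simp only []
    linarith
  have hcont : ContinuousAt (fun t : ℝ => μ x * t - (μ x - 1) * L) (⨅ a : Act x, F a) :=
    ((continuous_const.mul continuous_id).sub continuous_const).continuousAt
  calc vbar (some ℓ) + μ x * (vbar (some x) - vbar (some ℓ))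
      = μ x * (⨅ a : Act x, F a) - (μ x - 1) * L := by rw [← hLdef, hvF]; ring
    _ = ⨅ a : Act x, (μ x * F a - (μ x - 1) * L) :=
        Monotone.map_ciInf_of_continuousAt hcont hmono hbdd
    _ = ⨅ a : Act x, G a := iInf_congr key
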